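/- Suppose each component H_{i,j} is convex and L_H-smooth, and that x* ∈ ℝ^d is a minimizer of H with respect to which H is μ-quasi-strongly convex for some μ > 0. Let γ = 1/(6L_H), p ∈ (0,1], and define the Lyapunov function Φ^k = ‖x^k − x*‖² + (4γ²/(p n²))∑_{i,j=1}^n ‖∇H_{i,j}(w^k) − ∇H_{i,j}(x*)‖². Then the L-SVRHG iterates satisfy E[Φ^k] ≤ max{1 − μ/(6L_H), 1 − p/2}^k Φ⁰ for all k ≥ 0. -/

import Mathlib

/-!
STATEMENT 8: L-SVRHG with γ = 1/(6L_H), p ∈ (0,1], under convexity and L_H-smoothness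
of each H_{i,j} and μ-quasi-strong convexity of H at a minimizer x*:
E[Φ^k] ≤ max{1 − μ/(6L_H), 1 − p/2}^k Φ⁰, with
Φ^k = ‖x^k − x*‖² + (4γ²/(p n²)) ∑_{i,j} ‖∇H_{i,j}(w^k) − ∇H_{i,j}(x*)‖².
-/

open scoped RealInnerProductSpace BigOperators

noncomputable section

variable {n d1 d2 : ℕ}

/-- The signed gradient field ξᵢ(x) = (∇_{x1} gᵢ(x), −∇_{x2} gᵢ(x)). -/
def xi (g : EuclideanSpace ℝ (Fin d1 ⊕ Fin d2) → ℝ)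
    (x : EuclideanSpace ℝ (Fin d1 ⊕ Fin d2)) : EuclideanSpace ℝ (Fin d1 ⊕ Fin d2) :=
  (WithLp.equiv 2 _).symm (Sum.elim
    (fun a => gradient g x (Sum.inl a))
    (fun j => -(gradient g x (Sum.inr j))))

/-- The Hamiltonian component H_{i,j}(x) = ½⟨ξᵢ(x), ξⱼ(x)⟩. -/
def HamComp (g : Fin n → EuclideanSpace ℝ (Fin d1 ⊕ Fin d2) → ℝ) (i j : Fin n)
    (x : EuclideanSpace ℝ (Fin d1 ⊕ Fin d2)) : ℝ :=
  (1 / 2 : ℝ) * ⟪xi (g i) x, xi (g j) x⟫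

/-- The Hamiltonian H(x) = ½‖(1/n)∑ᵢξᵢ(x)‖². -/
def Ham (g : Fin n → EuclideanSpace ℝ (Fin d1 ⊕ Fin d2) → ℝ)
    (x : EuclideanSpace ℝ (Fin d1 ⊕ Fin d2)) : ℝ :=
  (1 / 2 : ℝ) * ‖(n : ℝ)⁻¹ • ∑ i, xi (g i) x‖ ^ 2

/-- One step of L-SVRHG on the state s = (x, w), given indices (i, j) and the
Bernoulli outcome θ: x ↦ x − γ(∇H_{i,j}(x) − ∇H_{i,j}(w) + ∇H(w)),
and w ↦ x if θ, w ↦ w otherwise. -/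
def lsvrhgStep (g : Fin n → EuclideanSpace ℝ (Fin d1 ⊕ Fin d2) → ℝ) (γ : ℝ)
    (i j : Fin n) (θ : Bool)
    (s : EuclideanSpace ℝ (Fin d1 ⊕ Fin d2) × EuclideanSpace ℝ (Fin d1 ⊕ Fin d2)) :
    EuclideanSpace ℝ (Fin d1 ⊕ Fin d2) × EuclideanSpace ℝ (Fin d1 ⊕ Fin d2) :=
  (s.1 - γ • (gradient (HamComp g i j) s.1 - gradient (HamComp g i j) s.2
      + gradient (Ham g) s.2),
   if θ then s.1 else s.2)

/-- `lsvrhgExp g γ p k φ s` is the expectation E[φ(x^k, w^k) | (x⁰, w⁰) = s] for the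
L-SVRHG Markov chain with (i_m, j_m) i.i.d. uniform on {1,…,n}² and θ_m i.i.d.
Bernoulli(p), all independent. -/
def lsvrhgExp (g : Fin n → EuclideanSpace ℝ (Fin d1 ⊕ Fin d2) → ℝ) (γ p : ℝ) :
    ℕ → (EuclideanSpace ℝ (Fin d1 ⊕ Fin d2) × EuclideanSpace ℝ (Fin d1 ⊕ Fin d2) → ℝ) →
      EuclideanSpace ℝ (Fin d1 ⊕ Fin d2) × EuclideanSpace ℝ (Fin d1 ⊕ Fin d2) → ℝ
  | 0, φ => φ
  | k + 1, φ => fun s => ((n : ℝ) ^ 2)⁻¹ * ∑ i, ∑ j,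
      (p * lsvrhgExp g γ p k φ (lsvrhgStep g γ i j true s)
        + (1 - p) * lsvrhgExp g γ p k φ (lsvrhgStep g γ i j false s))


set_option linter.unusedSectionVars false
set_option maxHeartbeats 1000000
set_option maxRecDepth 8000

section ConvexTools
variable {F : Type*} [NormedAddCommGroup F] [InnerProductSpace ℝ F] [CompleteSpace F]

theorem line_hasDerivAt (x v : F) (t : ℝ) : HasDerivAt (fun t : ℝ => x + t • v) v t := by
  simpa using ((hasDerivAt_id t).smul_const v).const_add x

theorem comp_line_hasDerivAt {f : F → ℝ} (x v : F) (t : ℝ)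
    (hx : DifferentiableAt ℝ f (x + t • v)) :
    HasDerivAt (fun t : ℝ => f (x + t • v)) (⟪gradient f (x + t • v), v⟫) t := by
  have := hx.hasFDerivAt.comp_hasDerivAt t (line_hasDerivAt x v t)
  have e : ⟪gradient f (x + t • v), v⟫ = fderiv ℝ f (x + t • v) v := by
    simp [gradient, real_inner_comm]
  rw [e]; exact this

-- convex first-order lower bound
theorem convex_lower {f : F → ℝ} (hc : ConvexOn ℝ Set.univ f)
    (x y : F) (hx : DifferentiableAt ℝ f x) :
    f x + ⟪gradient f x, y - x⟫ ≤ f y := by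
  set v := y - x with hv
  set q : ℝ → ℝ := fun t => f (x + t • v) with hq
  have hq0 : HasDerivAt q (⟪gradient f x, v⟫) 0 := by
    have := comp_line_hasDerivAt (f := f) x v 0 (by simpa using hx)
    convert this using 2 <;> simp
  have hslope : ∀ᶠ t in nhdsWithin (0:ℝ) (Set.Ioi 0), slope q 0 t ≤ f y - f x := by
    filter_upwards [Ioo_mem_nhdsGT_of_mem (Set.mem_Ico.2 ⟨le_refl _, one_pos⟩)] with t ht
    have h1 : q t ≤ (1 - t) * f x + t * f y := by
      have h2 := hc.2 (Set.mem_univ x) (Set.mem_univ y) (by linarith [ht.2] : (0:ℝ) ≤ 1 - t)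
        ht.1.le (by ring)
      have h3 : (1 - t) • x + t • y = x + t • v := by rw [hv]; module
      simpa [h3, smul_eq_mul] using h2
    have hq00 : q 0 = f x := by simp [hq]
    rw [slope_def_field, hq00, sub_zero, div_le_iff₀ ht.1]
    nlinarith [h1]
  have htends : Filter.Tendsto (slope q 0) (nhdsWithin (0:ℝ) (Set.Ioi 0)) (nhds (⟪gradient f x, v⟫)) := by
    have := hasDerivAt_iff_tendsto_slope.1 hq0
    exact this.mono_left (nhdsWithin_mono _ (fun t ht => Set.mem_compl_singleton_iff.2 (ne_of_gt ht)))
  have := le_of_tendsto htends hslope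
  linarith

-- descent lemma
theorem descent_lemma {f : F → ℝ} {L : ℝ} (hL : 0 < L)
    (hf : Differentiable ℝ f)
    (hlip : ∀ a b, ‖gradient f a - gradient f b‖ ≤ L * ‖a - b‖) (x y : F) :
    f y ≤ f x + ⟪gradient f x, y - x⟫ + L / 2 * ‖y - x‖ ^ 2 := by
  set v := y - x with hv
  have hgc : Continuous (gradient f) := by
    have : LipschitzWith (Real.toNNReal L) (gradient f) := by
      intro a b
      rw [edist_dist, edist_dist, dist_eq_norm, dist_eq_norm]
      calc (ENNReal.ofReal ‖gradient f a - gradient f b‖) ≤ ENNReal.ofReal (L * ‖a - b‖) :=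
            ENNReal.ofReal_le_ofReal (hlip a b)
        _ = _ := by rw [ENNReal.ofReal_mul hL.le]; rfl
    exact this.continuous
  set q' : ℝ → ℝ := fun t => ⟪gradient f (x + t • v), v⟫ with hq'
  have hq'c : Continuous q' := by
    exact (hgc.comp (by continuity)).inner continuous_const
  have hftc : ∫ t in (0:ℝ)..1, q' t = (fun t : ℝ => f (x + t • v)) 1 - (fun t : ℝ => f (x + t • v)) 0 := by
    exact intervalIntegral.integral_eq_sub_of_hasDerivAt (f := fun t : ℝ => f (x + t • v))
      (fun t _ => comp_line_hasDerivAt x v t (hf _)) (hq'c.intervalIntegrable 0 1)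
  have hbound : ∀ t ∈ Set.Icc (0:ℝ) 1, q' t - ⟪gradient f x, v⟫ ≤ L * ‖v‖ ^ 2 * t := by
    intro t ht
    have h1 : q' t - ⟪gradient f x, v⟫ = ⟪gradient f (x + t • v) - gradient f x, v⟫ := by
      rw [inner_sub_left]
    rw [h1]
    calc ⟪gradient f (x + t • v) - gradient f x, v⟫
        ≤ ‖gradient f (x + t • v) - gradient f x‖ * ‖v‖ := real_inner_le_norm _ _
      _ ≤ (L * ‖x + t • v - x‖) * ‖v‖ := by
          apply mul_le_mul_of_nonneg_right (hlip _ _) (norm_nonneg _)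
      _ = L * ‖v‖ ^ 2 * t := by
          rw [add_sub_cancel_left, norm_smul, Real.norm_eq_abs, abs_of_nonneg ht.1]; ring
  have hint : ∫ t in (0:ℝ)..1, (q' t - ⟪gradient f x, v⟫) ≤ ∫ t in (0:ℝ)..1, L * ‖v‖ ^ 2 * t := by
    apply intervalIntegral.integral_mono_on (by norm_num)
    · exact (hq'c.sub continuous_const).intervalIntegrable 0 1
    · exact (continuous_const.mul continuous_id).intervalIntegrable 0 1
    · exact hbound
  have h2 : ∫ t in (0:ℝ)..1, (q' t - ⟪gradient f x, v⟫) = (f y - f x) - ⟪gradient f x, v⟫ := by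
    rw [intervalIntegral.integral_sub (hq'c.intervalIntegrable 0 1)
      (intervalIntegrable_const), hftc]
    simp [hv]
  have h3 : ∫ t in (0:ℝ)..1, L * ‖v‖ ^ 2 * t = L / 2 * ‖v‖ ^ 2 := by
    rw [intervalIntegral.integral_const_mul, integral_id]
    ring
  rw [h2, h3] at hint
  linarith

-- cocoercivity
theorem cocoercivity {f : F → ℝ} {L : ℝ} (hL : 0 < L)
    (hc : ConvexOn ℝ Set.univ f) (hf : Differentiable ℝ f)
    (hlip : ∀ a b, ‖gradient f a - gradient f b‖ ≤ L * ‖a - b‖) (x y : F) :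
    ‖gradient f x - gradient f y‖ ^ 2 ≤ 2 * L * (f x - f y - ⟪gradient f y, x - y⟫) := by
  set u := gradient f x - gradient f y with hu
  set z := x - L⁻¹ • u with hz
  have h1 : f y + ⟪gradient f y, z - y⟫ ≤ f z := by
    have := convex_lower hc y z (hf y)
    linarith [this]
  have h2 : f z ≤ f x + ⟪gradient f x, z - x⟫ + L / 2 * ‖z - x‖ ^ 2 :=
    descent_lemma hL hf hlip x z
  have hzx : z - x = -(L⁻¹ • u) := by rw [hz]; abel
  have h3 : ⟪gradient f x, z - x⟫ = -(L⁻¹ * ⟪gradient f x, u⟫) := by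
    rw [hzx, inner_neg_right, real_inner_smul_right]
  have h4 : L / 2 * ‖z - x‖ ^ 2 = (2 * L)⁻¹ * ‖u‖ ^ 2 := by
    rw [hzx, norm_neg, norm_smul, Real.norm_eq_abs, abs_of_pos (inv_pos.2 hL)]
    field_simp
  have h5 : ⟪gradient f y, z - y⟫ = ⟪gradient f y, x - y⟫ - L⁻¹ * ⟪gradient f y, u⟫ := by
    have : z - y = (x - y) - L⁻¹ • u := by rw [hz]; abel
    rw [this, inner_sub_right, real_inner_smul_right]
  have h6 : ⟪gradient f x, u⟫ - ⟪gradient f y, u⟫ = ‖u‖ ^ 2 := by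
    rw [← inner_sub_left, ← hu, real_inner_self_eq_norm_sq]
  have hLinv : (0:ℝ) < L⁻¹ := inv_pos.2 hL
  -- combine
  have : f y + ⟪gradient f y, x - y⟫ + L⁻¹ * ‖u‖ ^ 2 - (2*L)⁻¹ * ‖u‖^2 ≤ f x := by
    nlinarith [h1, h2, h3, h4, h5, h6]
  have h7 : L⁻¹ * ‖u‖^2 - (2*L)⁻¹*‖u‖^2 = (2*L)⁻¹*‖u‖^2 := by
    field_simp; ring
  have hD : (2*L)⁻¹ * ‖u‖^2 ≤ f x - f y - ⟪gradient f y, x - y⟫ := by linarith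
  have h9 := mul_le_mul_of_nonneg_left hD (by linarith : (0:ℝ) ≤ 2*L)
  calc ‖u‖^2 = (2*L)*((2*L)⁻¹*‖u‖^2) := by field_simp
    _ ≤ _ := h9

theorem norm_add_sq_le_two (p q : F) : ‖p + q‖^2 ≤ 2*‖p‖^2 + 2*‖q‖^2 := by
  have h := norm_add_le p q
  have h2 : ‖p+q‖^2 ≤ (‖p‖+‖q‖)^2 := by nlinarith [norm_nonneg (p+q), norm_nonneg p, norm_nonneg q]
  nlinarith [sq_nonneg (‖p‖-‖q‖)]

end ConvexTools

section helpers
abbrev Esp (d1 d2 : ℕ) := EuclideanSpace ℝ (Fin d1 ⊕ Fin d2)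

def Tlin : Esp d1 d2 →ₗ[ℝ] Esp d1 d2 where
  toFun v := (WithLp.equiv 2 _).symm (Sum.elim
    (fun a => v (Sum.inl a)) (fun j => -(v (Sum.inr j))))
  map_add' u v := by
    ext i
    cases i <;> simp <;> ring
  map_smul' c v := by
    ext i
    cases i <;> simp <;> ring

theorem xi_eq_T (g : Esp d1 d2 → ℝ) (x : Esp d1 d2) :
    xi g x = Tlin (gradient g x) := rfl

theorem contDiff_gradient {f : Esp d1 d2 → ℝ} (hf : ContDiff ℝ 2 f) :
    ContDiff ℝ 1 (gradient f) := by
  have h1 : ContDiff ℝ 1 (fderiv ℝ f) := hf.fderiv_right (by norm_num)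
  have h2 : gradient f = fun x =>
      (InnerProductSpace.toDual ℝ (Esp d1 d2)).symm (fderiv ℝ f x) := rfl
  rw [h2]
  exact (InnerProductSpace.toDual ℝ (Esp d1 d2)).symm.contDiff.comp h1

theorem contDiff_xi {f : Esp d1 d2 → ℝ} (hf : ContDiff ℝ 2 f) :
    ContDiff ℝ 1 (xi f) := by
  have : xi f = fun x => (LinearMap.toContinuousLinearMap (Tlin (d1 := d1) (d2 := d2)))
      (gradient f x) := rfl
  rw [this]
  exact (LinearMap.toContinuousLinearMap Tlin).contDiff.comp (contDiff_gradient hf)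

theorem contDiff_HamComp (g : Fin n → Esp d1 d2 → ℝ) (hg : ∀ i, ContDiff ℝ 2 (g i))
    (i j : Fin n) : ContDiff ℝ 1 (HamComp g i j) :=
  ContDiff.const_smul (1/2 : ℝ) (ContDiff.inner ℝ (contDiff_xi (hg i)) (contDiff_xi (hg j)))

theorem Ham_eq_avg (g : Fin n → Esp d1 d2 → ℝ) (x : Esp d1 d2) :
    Ham g x = ((n : ℝ)^2)⁻¹ * ∑ i, ∑ j, HamComp g i j x := by
  have h0 : ‖(n : ℝ)⁻¹ • ∑ i, xi (g i) x‖^2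
      = (n:ℝ)⁻¹ * ((n:ℝ)⁻¹ * ∑ i, ∑ j, ⟪xi (g i) x, xi (g j) x⟫) := by
    rw [← real_inner_self_eq_norm_sq, real_inner_smul_left, real_inner_smul_right, sum_inner]
    simp_rw [inner_sum]
  have h1 : ∑ i, ∑ j, HamComp g i j x
      = (1/2 : ℝ) * ∑ i, ∑ j, ⟪xi (g i) x, xi (g j) x⟫ := by
    unfold HamComp
    simp_rw [← Finset.mul_sum]
  unfold Ham
  rw [h0, h1]
  ring

theorem gradient_Ham (g : Fin n → Esp d1 d2 → ℝ) (hg : ∀ i, ContDiff ℝ 2 (g i))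
    (x : Esp d1 d2) :
    gradient (Ham g) x = ((n : ℝ)^2)⁻¹ • ∑ i, ∑ j, gradient (HamComp g i j) x := by
  have hdiff : ∀ i j : Fin n, DifferentiableAt ℝ (HamComp g i j) x := fun i j =>
    ((contDiff_HamComp g hg i j).differentiable one_ne_zero) x
  have h1 : Ham g = fun x => ((n : ℝ)^2)⁻¹ * ∑ i, ∑ j, HamComp g i j x := by
    funext z; exact Ham_eq_avg g z
  rw [h1]
  unfold gradient
  have h2 : fderiv ℝ (fun x => ((n : ℝ)^2)⁻¹ * ∑ i, ∑ j, HamComp g i j x) x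
      = ((n : ℝ)^2)⁻¹ • ∑ i : Fin n, ∑ j : Fin n, fderiv ℝ (HamComp g i j) x := by
    rw [fderiv_const_mul]
    · congr 1
      rw [fderiv_fun_sum]
      · exact Finset.sum_congr rfl fun i _ => fderiv_fun_sum (fun j _ => hdiff i j)
      · intro i _
        exact DifferentiableAt.fun_sum (fun j _ => hdiff i j)
    · exact DifferentiableAt.fun_sum fun i _ => DifferentiableAt.fun_sum (fun j _ => hdiff i j)
  rw [h2, map_smul, map_sum]
  congr 1
  exact Finset.sum_congr rfl fun i _ => map_sum _ _ _

end helpers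

theorem gradient_Ham_xstar (g : Fin n → Esp d1 d2 → ℝ) (hg : ∀ i, ContDiff ℝ 2 (g i))
    (xstar : Esp d1 d2) (hmin : ∀ y, Ham g xstar ≤ Ham g y) :
    gradient (Ham g) xstar = 0 := by
  have hdiff : DifferentiableAt ℝ (Ham g) xstar := by
    have h1 : Ham g = fun x => ((n : ℝ)^2)⁻¹ * ∑ i, ∑ j, HamComp g i j x := by
      funext z; exact Ham_eq_avg g z
    rw [h1]
    exact (DifferentiableAt.fun_sum fun i _ => DifferentiableAt.fun_sum fun j _ =>
      ((contDiff_HamComp g hg i j).differentiable one_ne_zero).differentiableAt).const_mul _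
  have hloc : IsLocalMin (Ham g) xstar := Filter.Eventually.of_forall hmin
  have h2 : fderiv ℝ (Ham g) xstar = 0 := hloc.fderiv_eq_zero
  unfold gradient
  rw [h2, map_zero]

theorem onestep
    (hn : 0 < n) (g : Fin n → Esp d1 d2 → ℝ)
    (hg : ∀ i, ContDiff ℝ 2 (g i))
    (LH : ℝ) (hLH : 0 < LH)
    (hconv : ∀ i j, ConvexOn ℝ Set.univ (HamComp g i j))
    (hsmooth : ∀ i j x y,
      ‖gradient (HamComp g i j) x - gradient (HamComp g i j) y‖ ≤ LH * ‖x - y‖)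
    (xstar : Esp d1 d2)
    (hmin : ∀ y, Ham g xstar ≤ Ham g y)
    (μ : ℝ) (hμ : 0 < μ)
    (hqsc : ∀ x, Ham g x + ⟪gradient (Ham g) x, xstar - x⟫ + μ / 2 * ‖xstar - x‖ ^ 2
      ≤ Ham g xstar)
    (γ : ℝ) (hγ : γ = 1 / (6 * LH))
    (p : ℝ) (hp0 : 0 < p) (hp1 : p ≤ 1)
    (Φ : Esp d1 d2 × Esp d1 d2 → ℝ)
    (hΦ : Φ = fun s => ‖s.1 - xstar‖ ^ 2 + 4 * γ ^ 2 / (p * (n : ℝ) ^ 2) *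
      ∑ i, ∑ j, ‖gradient (HamComp g i j) s.2 - gradient (HamComp g i j) xstar‖ ^ 2)
    (x w : Esp d1 d2) :
    ((n : ℝ)^2)⁻¹ * ∑ i, ∑ j,
      (p * Φ (lsvrhgStep g γ i j true (x, w)) + (1 - p) * Φ (lsvrhgStep g γ i j false (x, w)))
      ≤ max (1 - μ / (6 * LH)) (1 - p / 2) * Φ (x, w) := by
  have hdiffij : ∀ i j, Differentiable ℝ (HamComp g i j) := fun i j =>
    (contDiff_HamComp g hg i j).differentiable one_ne_zero
  have hn' : (n:ℝ) ≠ 0 := Nat.cast_ne_zero.2 hn.ne'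
  have hγ0 : 0 < γ := by rw [hγ]; positivity
  set c : ℝ := ((n : ℝ)^2)⁻¹ with hcdef
  have hc0 : 0 ≤ c := by positivity
  have hcN : c * (n:ℝ)^2 = 1 := inv_mul_cancel₀ (by positivity)
  set K : ℝ := 4 * γ ^ 2 / (p * (n : ℝ) ^ 2) with hKdef
  have hK0 : 0 ≤ K := by positivity
  set Gm : Fin n → Fin n → Esp d1 d2 := fun i j => gradient (HamComp g i j) x with hGmx
  set ρ : ℝ := max (1 - μ / (6 * LH)) (1 - p / 2) with hρ
  set R : ℝ := ‖x - xstar‖^2 with hR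
  set Sx : ℝ := ∑ i, ∑ j, ‖gradient (HamComp g i j) x - gradient (HamComp g i j) xstar‖^2 with hSx
  set Sw : ℝ := ∑ i, ∑ j, ‖gradient (HamComp g i j) w - gradient (HamComp g i j) xstar‖^2 with hSw
  set u : Fin n → Fin n → Esp d1 d2 := fun i j =>
    gradient (HamComp g i j) x - gradient (HamComp g i j) w + gradient (Ham g) w with hu
  set U : ℝ := c * ∑ i, ∑ j, ‖u i j‖^2 with hU
  set IP : ℝ := ⟪gradient (Ham g) x, x - xstar⟫ with hIP
  have hGstar : gradient (Ham g) xstar = 0 := gradient_Ham_xstar g hg xstar hmin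
  -- F1 : unbiasedness
  have hgradx := gradient_Ham g hg x
  have hgradw := gradient_Ham g hg w
  have hgradstar := gradient_Ham g hg xstar
  have hnn : c * ((n*n : ℕ) : ℝ) = 1 := by
    rw [hcdef]; push_cast; rw [← pow_two]; exact inv_mul_cancel₀ (by positivity)
  have F1 : c • (∑ i, ∑ j, u i j) = gradient (Ham g) x := by
    have e1 : (∑ i, ∑ j, u i j)
        = (∑ i, ∑ j, gradient (HamComp g i j) x)
          - (∑ i, ∑ j, gradient (HamComp g i j) w)
          + (n*n : ℕ) • gradient (Ham g) w := by
      simp only [hu, Finset.sum_add_distrib, Finset.sum_sub_distrib, Finset.sum_const,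
        Finset.card_univ, Fintype.card_fin, smul_smul]
    have e2 : c • ((n*n : ℕ) • gradient (Ham g) w) = gradient (Ham g) w := by
      rw [← Nat.cast_smul_eq_nsmul ℝ, smul_smul, hnn, one_smul]
    rw [e1, smul_add, smul_sub, e2, ← hcdef] at *
    rw [← hgradx, ← hgradw]
    abel
  -- F3 : averaged cocoercivity
  have hHavg : ∀ z : Esp d1 d2, Ham g z = c * ∑ i, ∑ j, HamComp g i j z := by
    intro z; rw [Ham_eq_avg, hcdef]
  have F3 : ∀ z : Esp d1 d2, c * ∑ i, ∑ j,
      ‖gradient (HamComp g i j) z - gradient (HamComp g i j) xstar‖^2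
      ≤ 2 * LH * (Ham g z - Ham g xstar) := by
    intro z
    have coco : ∀ i j : Fin n, ‖gradient (HamComp g i j) z - gradient (HamComp g i j) xstar‖^2
        ≤ 2*LH*(HamComp g i j z - HamComp g i j xstar
            - ⟪gradient (HamComp g i j) xstar, z - xstar⟫) :=
      fun i j => cocoercivity hLH (hconv i j) (hdiffij i j) (fun a b => hsmooth i j a b) z xstar
    have hsum : ∑ i, ∑ j, ‖gradient (HamComp g i j) z - gradient (HamComp g i j) xstar‖^2
        ≤ ∑ i, ∑ j, (2*LH*(HamComp g i j z - HamComp g i j xstar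
            - ⟪gradient (HamComp g i j) xstar, z - xstar⟫)) :=
      Finset.sum_le_sum fun i _ => Finset.sum_le_sum fun j _ => coco i j
    have hzero : c * ∑ i, ∑ j, ⟪gradient (HamComp g i j) xstar, z - xstar⟫ = 0 := by
      have h1 : ∑ i, ∑ j, ⟪gradient (HamComp g i j) xstar, z - xstar⟫
          = ⟪∑ i, ∑ j, gradient (HamComp g i j) xstar, z - xstar⟫ := by
        simp_rw [sum_inner]
      rw [h1, ← real_inner_smul_left]
      have h2 : c • (∑ i, ∑ j, gradient (HamComp g i j) xstar) = gradient (Ham g) xstar := by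
        rw [hgradstar, hcdef]
      rw [h2, hGstar, inner_zero_left]
    have hsplit : ∑ i, ∑ j, (2*LH*(HamComp g i j z - HamComp g i j xstar
            - ⟪gradient (HamComp g i j) xstar, z - xstar⟫))
        = 2*LH*((∑ i, ∑ j, HamComp g i j z) - (∑ i, ∑ j, HamComp g i j xstar)
            - ∑ i, ∑ j, ⟪gradient (HamComp g i j) xstar, z - xstar⟫) := by
      simp only [mul_sub, Finset.mul_sum, Finset.sum_sub_distrib]
    calc c * ∑ i, ∑ j, ‖gradient (HamComp g i j) z - gradient (HamComp g i j) xstar‖^2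
        ≤ c * ∑ i, ∑ j, (2*LH*(HamComp g i j z - HamComp g i j xstar
            - ⟪gradient (HamComp g i j) xstar, z - xstar⟫)) :=
          mul_le_mul_of_nonneg_left hsum hc0
      _ = 2*LH*((c * ∑ i, ∑ j, HamComp g i j z) - (c * ∑ i, ∑ j, HamComp g i j xstar))
            - 2*LH*(c * ∑ i, ∑ j, ⟪gradient (HamComp g i j) xstar, z - xstar⟫) := by
          rw [hsplit]; ring
      _ = 2 * LH * (Ham g z - Ham g xstar) := by
          rw [hzero, ← hHavg, ← hHavg]; ring
  -- F4 : expectation expansion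
  have F4 : ((n : ℝ)^2)⁻¹ * ∑ i, ∑ j,
      (p * Φ (lsvrhgStep g γ i j true (x, w)) + (1 - p) * Φ (lsvrhgStep g γ i j false (x, w)))
      = R - 2*γ*IP + γ^2*U + K*p*Sx + K*(1-p)*Sw := by
    have hstep_t : ∀ i j : Fin n, Φ (lsvrhgStep g γ i j true (x, w))
        = ‖x - γ • u i j - xstar‖^2 + K * Sx := by
      intro i j
      simp only [lsvrhgStep, hΦ, hu, reduceIte]
      rfl
    have hstep_f : ∀ i j : Fin n, Φ (lsvrhgStep g γ i j false (x, w))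
        = ‖x - γ • u i j - xstar‖^2 + K * Sw := by
      intro i j
      simp only [lsvrhgStep, hΦ, hu, reduceIte, Bool.false_eq_true, if_false]
      rfl
    have hN : ∀ i j : Fin n, ‖x - γ • u i j - xstar‖^2
        = R - 2*γ*⟪x - xstar, u i j⟫ + γ^2*‖u i j‖^2 := by
      intro i j
      have e : x - γ • u i j - xstar = (x - xstar) - γ • u i j := by abel
      rw [e, norm_sub_sq_real, real_inner_smul_right, norm_smul, hR]
      simp only [Real.norm_eq_abs, mul_pow, sq_abs]
      ring
    have hip2 : c * ∑ i, ∑ j, ⟪x - xstar, u i j⟫ = IP := by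
      have h1 : ∑ i, ∑ j, ⟪x - xstar, u i j⟫ = ⟪x - xstar, ∑ i, ∑ j, u i j⟫ := by
        simp_rw [inner_sum]
      rw [h1, ← real_inner_smul_right, F1, hIP, real_inner_comm]
    have A : ∑ i, ∑ j, (p * Φ (lsvrhgStep g γ i j true (x, w))
          + (1 - p) * Φ (lsvrhgStep g γ i j false (x, w)))
        = (∑ i, ∑ j, ‖x - γ • u i j - xstar‖^2)
          + (n:ℝ)*((n:ℝ)*(K*p*Sx + K*(1-p)*Sw)) := by
      have A1 : ∑ i, ∑ j, (p * Φ (lsvrhgStep g γ i j true (x, w))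
            + (1 - p) * Φ (lsvrhgStep g γ i j false (x, w)))
          = ∑ i, ∑ j, (‖x - γ • u i j - xstar‖^2 + (K*p*Sx + K*(1-p)*Sw)) := by
        apply Finset.sum_congr rfl; intro i _
        apply Finset.sum_congr rfl; intro j _
        rw [hstep_t i j, hstep_f i j]; ring
      rw [A1]
      simp only [Finset.sum_add_distrib, Finset.sum_const, Finset.card_univ,
        Fintype.card_fin, nsmul_eq_mul]
      ring
    have B : ∑ i, ∑ j, ‖x - γ • u i j - xstar‖^2
        = (n:ℝ)*((n:ℝ)*R) - 2*γ*(∑ i, ∑ j, ⟪x - xstar, u i j⟫)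
          + γ^2 * ∑ i, ∑ j, ‖u i j‖^2 := by
      simp only [hN]
      simp only [Finset.sum_add_distrib, Finset.sum_sub_distrib, Finset.sum_const,
        Finset.card_univ, Fintype.card_fin, nsmul_eq_mul, Finset.mul_sum]
    have hcn2 : c * ((n:ℝ)*(n:ℝ)) = 1 := by
      rw [hcdef, ← pow_two]; exact inv_mul_cancel₀ (by positivity)
    rw [A, B, hU]
    linear_combination (R + (K*p*Sx + K*(1-p)*Sw))*hcn2 - 2*γ*hip2
  -- F5
  have F5 : -(2*γ)*IP ≤ 2*γ*(Ham g xstar - Ham g x) - γ*μ*R := by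
    have h := hqsc x
    have e1 : ⟪gradient (Ham g) x, xstar - x⟫ = -IP := by
      rw [hIP, show xstar - x = -(x - xstar) from by abel, inner_neg_right]
    have e2 : ‖xstar - x‖^2 = R := by rw [hR, norm_sub_rev]
    rw [e1, e2] at h
    nlinarith [mul_le_mul_of_nonneg_left h (by linarith : (0:ℝ) ≤ 2*γ)]
  -- F6 : second moment bound
  have F6 : U ≤ 4*LH*(Ham g x - Ham g xstar) + 2*(c*Sw) := by
    set C : Esp d1 d2 := gradient (Ham g) w with hC
    set b : Fin n → Fin n → Esp d1 d2 := fun i j =>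
      gradient (HamComp g i j) w - gradient (HamComp g i j) xstar with hb
    set a : Fin n → Fin n → Esp d1 d2 := fun i j =>
      gradient (HamComp g i j) x - gradient (HamComp g i j) xstar with ha
    have hpt : ∀ i j : Fin n, ‖u i j‖^2 ≤ 2*‖a i j‖^2 + 2*‖C - b i j‖^2 := by
      intro i j
      have e : u i j = a i j + (C - b i j) := by
        show gradient (HamComp g i j) x - gradient (HamComp g i j) w + gradient (Ham g) w
          = _
        simp only [ha, hb, hC]; abel
      rw [e]; exact norm_add_sq_le_two _ _
    have hsum1 : ∑ i, ∑ j, ‖u i j‖^2 ≤ ∑ i, ∑ j, (2*‖a i j‖^2 + 2*‖C - b i j‖^2) :=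
      Finset.sum_le_sum fun i _ => Finset.sum_le_sum fun j _ => hpt i j
    have hsplit : ∑ i, ∑ j, (2*‖a i j‖^2 + 2*‖C - b i j‖^2)
        = 2*Sx + 2*∑ i, ∑ j, ‖C - b i j‖^2 := by
      rw [hSx]
      simp only [Finset.sum_add_distrib, Finset.mul_sum, ha]
    -- variance bound
    have hmean : c • (∑ i, ∑ j, b i j) = C := by
      have e1 : (∑ i, ∑ j, b i j) = (∑ i, ∑ j, gradient (HamComp g i j) w)
          - (∑ i, ∑ j, gradient (HamComp g i j) xstar) := by
        simp only [hb, Finset.sum_sub_distrib]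
      rw [e1, smul_sub]
      have e2 : c • (∑ i, ∑ j, gradient (HamComp g i j) w) = C := by
        rw [hgradw, hcdef]
      have e3 : c • (∑ i, ∑ j, gradient (HamComp g i j) xstar) = gradient (Ham g) xstar := by
        rw [hgradstar, hcdef]
      rw [e2, e3, hGstar, sub_zero]
    have hvar : c * ∑ i, ∑ j, ‖C - b i j‖^2 ≤ c * Sw := by
      have e1 : ∑ i, ∑ j, ‖C - b i j‖^2
          = (∑ _i : Fin n, ∑ _j : Fin n, ‖C‖^2) - 2*⟪C, ∑ i, ∑ j, b i j⟫ + Sw := by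
        rw [hSw]
        simp only [inner_sum, Finset.mul_sum]
        simp only [norm_sub_sq_real, Finset.sum_add_distrib, Finset.sum_sub_distrib,
          Finset.mul_sum, hb]
      have e2 : ∑ i : Fin n, ∑ j : Fin n, ‖C‖^2 = (n:ℝ)^2 * ‖C‖^2 := by
        simp [Finset.sum_const, Finset.card_univ, Fintype.card_fin, nsmul_eq_mul]
        ring
      have e3 : c * (2*⟪C, ∑ i, ∑ j, b i j⟫) = 2*‖C‖^2 := by
        have : (c : ℝ) * ⟪C, ∑ i, ∑ j, b i j⟫ = ⟪C, c • ∑ i, ∑ j, b i j⟫ := by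
          rw [real_inner_smul_right]
        calc c * (2*⟪C, ∑ i, ∑ j, b i j⟫) = 2 * (c * ⟪C, ∑ i, ∑ j, b i j⟫) := by ring
          _ = 2 * ⟪C, C⟫ := by rw [this, hmean]
          _ = 2*‖C‖^2 := by rw [real_inner_self_eq_norm_sq]
      have e4 : c * ((n:ℝ)^2 * ‖C‖^2) = ‖C‖^2 := by
        rw [hcdef]; field_simp
      have expand : c * ∑ i, ∑ j, ‖C - b i j‖^2
          = ‖C‖^2 - 2*‖C‖^2 + c * Sw := by
        rw [e1, mul_add, mul_sub, e2, e4, e3]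
      rw [expand]
      nlinarith [sq_nonneg ‖C‖]
    have hF3x := F3 x
    rw [← hSx] at hF3x
    calc U = c * ∑ i, ∑ j, ‖u i j‖^2 := hU
      _ ≤ c * ∑ i, ∑ j, (2*‖a i j‖^2 + 2*‖C - b i j‖^2) := mul_le_mul_of_nonneg_left hsum1 hc0
      _ = 2*(c*Sx) + 2*(c * ∑ i, ∑ j, ‖C - b i j‖^2) := by rw [hsplit]; ring
      _ ≤ 2*(2*LH*(Ham g x - Ham g xstar)) + 2*(c*Sw) := by
          have := mul_le_mul_of_nonneg_left hvar (by norm_num : (0:ℝ) ≤ 2)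
          nlinarith [hF3x]
      _ = 4*LH*(Ham g x - Ham g xstar) + 2*(c*Sw) := by ring
  -- combine
  have hF3x : c*Sx ≤ 2*LH*(Ham g x - Ham g xstar) := by
    have h := F3 x; rw [← hSx] at h; exact h
  have hγμ : 1 - γ*μ ≤ ρ := by
    have e : 1 - γ*μ = 1 - μ/(6*LH) := by rw [hγ]; ring
    rw [e, hρ]; exact le_max_left _ _
  have hp2 : 1 - p/2 ≤ ρ := by rw [hρ]; exact le_max_right _ _
  have hγLH : -2*γ + 12*γ^2*LH = 0 := by
    rw [hγ]; field_simp; ring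
  have hKp : K*p = 4*γ^2*c := by
    rw [hKdef, hcdef]
    field_simp
    try ring
  have hK2 : 2*γ^2*c + K*(1-p) = (1 - p/2)*K := by
    linear_combination (-(1:ℝ)/2)*hKp
  have hΦxw : Φ (x, w) = R + K * Sw := by
    simp only [hΦ]
    try rw [hR, hSw]
  have hR0 : 0 ≤ R := by rw [hR]; positivity
  have hSw0 : 0 ≤ Sw := by
    rw [hSw]
    exact Finset.sum_nonneg fun i _ => Finset.sum_nonneg fun j _ => sq_nonneg _
  have hKSw0 : 0 ≤ K*Sw := mul_nonneg hK0 hSw0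
  rw [F4]
  calc R - 2*γ*IP + γ^2*U + K*p*Sx + K*(1-p)*Sw
      ≤ R + (2*γ*(Ham g xstar - Ham g x) - γ*μ*R)
        + γ^2*(4*LH*(Ham g x - Ham g xstar) + 2*(c*Sw)) + K*p*Sx + K*(1-p)*Sw := by
        have h6 := mul_le_mul_of_nonneg_left F6 (sq_nonneg γ)
        linarith [F5, h6]
    _ ≤ R + (2*γ*(Ham g xstar - Ham g x) - γ*μ*R)
        + γ^2*(4*LH*(Ham g x - Ham g xstar) + 2*(c*Sw))
        + 4*γ^2*(2*LH*(Ham g x - Ham g xstar)) + K*(1-p)*Sw := by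
        have h7 : K*p*Sx = 4*γ^2*(c*Sx) := by rw [hKp]; ring
        have h8 := mul_le_mul_of_nonneg_left hF3x (by positivity : (0:ℝ) ≤ 4*γ^2)
        rw [h7]
        linarith [h8]
    _ = (1 - γ*μ)*R + (-2*γ + 12*γ^2*LH)*(Ham g x - Ham g xstar)
        + (2*γ^2*c + K*(1-p))*Sw := by ring
    _ = (1 - γ*μ)*R + (1 - p/2)*(K*Sw) := by rw [hγLH, hK2]; ring
    _ ≤ ρ*R + ρ*(K*Sw) := by
        have h9 := mul_le_mul_of_nonneg_right hγμ hR0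
        have h10 := mul_le_mul_of_nonneg_right hp2 hKSw0
        linarith
    _ = ρ * Φ (x, w) := by rw [hΦxw]; ring


theorem lsvrhg_linear_convergence
    (hn : 0 < n) (g : Fin n → EuclideanSpace ℝ (Fin d1 ⊕ Fin d2) → ℝ)
    (hg : ∀ i, ContDiff ℝ 2 (g i))
    (LH : ℝ) (hLH : 0 < LH)
    -- each H_{i,j} is convex and L_H-smooth
    (hconv : ∀ i j, ConvexOn ℝ Set.univ (HamComp g i j))
    (hsmooth : ∀ i j x y,
      ‖gradient (HamComp g i j) x - gradient (HamComp g i j) y‖ ≤ LH * ‖x - y‖)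
    (xstar : EuclideanSpace ℝ (Fin d1 ⊕ Fin d2))
    (hmin : ∀ y, Ham g xstar ≤ Ham g y)
    (μ : ℝ) (hμ : 0 < μ)
    -- μ-quasi-strong convexity of H with respect to x*
    (hqsc : ∀ x, Ham g x + ⟪gradient (Ham g) x, xstar - x⟫ + μ / 2 * ‖xstar - x‖ ^ 2
      ≤ Ham g xstar)
    (γ : ℝ) (hγ : γ = 1 / (6 * LH))
    (p : ℝ) (hp0 : 0 < p) (hp1 : p ≤ 1)
    (Φ : EuclideanSpace ℝ (Fin d1 ⊕ Fin d2) × EuclideanSpace ℝ (Fin d1 ⊕ Fin d2) → ℝ)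
    (hΦ : Φ = fun s => ‖s.1 - xstar‖ ^ 2 + 4 * γ ^ 2 / (p * (n : ℝ) ^ 2) *
      ∑ i, ∑ j, ‖gradient (HamComp g i j) s.2 - gradient (HamComp g i j) xstar‖ ^ 2)
    (x0 : EuclideanSpace ℝ (Fin d1 ⊕ Fin d2)) :
    ∀ k : ℕ, lsvrhgExp g γ p k Φ (x0, x0)
      ≤ max (1 - μ / (6 * LH)) (1 - p / 2) ^ k * Φ (x0, x0) := by
  set ρ : ℝ := max (1 - μ / (6 * LH)) (1 - p / 2) with hρdef
  have hρ0 : (0:ℝ) ≤ ρ := le_trans (by linarith : (0:ℝ) ≤ 1 - p/2) (le_max_right _ _)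
  suffices h : ∀ (k : ℕ) (s : EuclideanSpace ℝ (Fin d1 ⊕ Fin d2) ×
      EuclideanSpace ℝ (Fin d1 ⊕ Fin d2)), lsvrhgExp g γ p k Φ s ≤ ρ ^ k * Φ s by
    intro k; exact h k (x0, x0)
  intro k
  induction k with
  | zero =>
    intro s
    simp [lsvrhgExp]
  | succ k ih =>
    rintro ⟨x, w⟩
    have hone := onestep hn g hg LH hLH hconv hsmooth xstar hmin μ hμ hqsc γ hγ p hp0 hp1 Φ hΦ x w
    rw [← hρdef] at hone
    show ((n : ℝ) ^ 2)⁻¹ * ∑ i, ∑ j,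
        (p * lsvrhgExp g γ p k Φ (lsvrhgStep g γ i j true (x, w))
          + (1 - p) * lsvrhgExp g γ p k Φ (lsvrhgStep g γ i j false (x, w)))
        ≤ ρ ^ (k+1) * Φ (x, w)
    calc ((n : ℝ) ^ 2)⁻¹ * ∑ i, ∑ j,
        (p * lsvrhgExp g γ p k Φ (lsvrhgStep g γ i j true (x, w))
          + (1 - p) * lsvrhgExp g γ p k Φ (lsvrhgStep g γ i j false (x, w)))
        ≤ ((n : ℝ) ^ 2)⁻¹ * ∑ i, ∑ j,
          (ρ ^ k * (p * Φ (lsvrhgStep g γ i j true (x, w))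
            + (1 - p) * Φ (lsvrhgStep g γ i j false (x, w)))) := by
          apply mul_le_mul_of_nonneg_left _ (by positivity)
          apply Finset.sum_le_sum; intro i _
          apply Finset.sum_le_sum; intro j _
          have h1 := ih (lsvrhgStep g γ i j true (x, w))
          have h2 := ih (lsvrhgStep g γ i j false (x, w))
          nlinarith [mul_le_mul_of_nonneg_left h1 hp0.le,
            mul_le_mul_of_nonneg_left h2 (by linarith : (0:ℝ) ≤ 1 - p)]
      _ = ρ ^ k * (((n : ℝ) ^ 2)⁻¹ * ∑ i, ∑ j,
            (p * Φ (lsvrhgStep g γ i j true (x, w))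
              + (1 - p) * Φ (lsvrhgStep g γ i j false (x, w)))) := by
          simp only [Finset.mul_sum]
          apply Finset.sum_congr rfl; intro i _
          apply Finset.sum_congr rfl; intro j _
          ring
      _ ≤ ρ ^ k * (ρ * Φ (x, w)) := mul_le_mul_of_nonneg_left hone (pow_nonneg hρ0 k)
      _ = ρ ^ (k+1) * Φ (x, w) := by ring

end
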